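/- arXiv:1809.04807 — 4 statements merged into one kernel-verified Lean document; each statement's English description precedes it below -/
import Mathlib

section
/- Let r be a real root of x^3 - 5x^2 + 10x - 10 = 0 and define δ1 = (r^2 - 6r + 10)/4, δ2 = (-r^2 + 5r - 5)/3, δ3 = (r^2 - 2r + 2)/12. Then for all real (or complex) z, δ1(1 + z/r) + δ2(1 + z/r)^2 + δ3(1 + z/r)^5 = 1 + z + z^2/2 + z^3/6 + z^4/(12r) + z^5/(60r^2). -/
theorem stmt_1 (r : ℝ) (hr : r ^ 3 - 5 * r ^ 2 + 10 * r - 10 = 0) (z : ℂ) :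
    ((r ^ 2 - 6 * r + 10) / 4 : ℂ) * (1 + z / r)
      + ((-r ^ 2 + 5 * r - 5) / 3 : ℂ) * (1 + z / r) ^ 2
      + ((r ^ 2 - 2 * r + 2) / 12 : ℂ) * (1 + z / r) ^ 5
    = 1 + z + z ^ 2 / 2 + z ^ 3 / 6 + z ^ 4 / (12 * r) + z ^ 5 / (60 * r ^ 2) := by
  have hr0 : r ≠ 0 := by rintro rfl; norm_num at hr
  have h0 : (r : ℂ) ≠ 0 := by exact_mod_cast hr0
  have hc : (r : ℂ) ^ 3 - 5 * (r : ℂ) ^ 2 + 10 * (r : ℂ) - 10 = 0 := by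
    exact_mod_cast congrArg (Complex.ofReal) hr
  field_simp
  linear_combination (-(1728 : ℂ) * z ^ 5 - 8640 * (r:ℂ) * z ^ 4
    - 17280 * (r:ℂ) ^ 2 * z ^ 3) * hc
end

section
/- Let r be the real root of x^3 - 5x^2 + 10x - 10 = 0. Then the quartic 3r^4 - 40r^3 + 175r^2 - 330r + 250 is nonzero. -/
theorem stmt_4 (r : ℝ) (hr : r ^ 3 - 5 * r ^ 2 + 10 * r - 10 = 0) :
    3 * r ^ 4 - 40 * r ^ 3 + 175 * r ^ 2 - 330 * r + 250 ≠ 0 := by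
  intro h
  have h2 : 10 * r * (2 * r - 5) = 0 := by linear_combination h - (3 * r - 25) * hr
  rcases mul_eq_zero.mp h2 with h3 | h3
  · have : r = 0 := by linarith [mul_eq_zero.mp (by linarith : (10:ℝ) * r = 0)]
    rw [this] at hr; norm_num at hr
  · have : r = 5 / 2 := by linarith
    rw [this] at hr; norm_num at hr
end

section
/- Let s ≥ 1 and let 𝔸 be the (s+1)×(s+1) strictly lower triangular matrix with all entries below the diagonal equal to 1/s. Then for r = s, the matrix I + r𝔸 is invertible, (I + r𝔸)^{-1}e ≥ 0, and r(I + r𝔸)^{-1}𝔸 ≥ 0 componentwise. In particular R(𝔸) ≥ s. -/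
open Matrix

theorem stmt_8 (s : ℕ) (hs : 1 ≤ s)
    (A : Matrix (Fin (s + 1)) (Fin (s + 1)) ℝ)
    (hA : ∀ i j, A i j = if (j : ℕ) < (i : ℕ) then (1 : ℝ) / s else 0) :
    IsUnit (1 + (s : ℝ) • A) ∧
    (∀ i, 0 ≤ ((1 + (s : ℝ) • A)⁻¹ *ᵥ (fun _ => (1 : ℝ))) i) ∧
    (∀ i j, 0 ≤ ((s : ℝ) • ((1 + (s : ℝ) • A)⁻¹ * A)) i j) := by
  have hs0 : (s:ℝ) ≠ 0 := Nat.cast_ne_zero.mpr (by omega)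
  set M : Matrix (Fin (s+1)) (Fin (s+1)) ℝ := 1 + (s:ℝ) • A with hM
  have hMe : ∀ i j : Fin (s+1), M i j = if (j:ℕ) ≤ (i:ℕ) then 1 else 0 := by
    intro i j
    have : M i j = (if i = j then (1:ℝ) else 0) + (s:ℝ) * A i j := by
      simp [hM, Matrix.add_apply, Matrix.one_apply, Matrix.smul_apply]
    rw [this, hA]
    rcases lt_trichotomy (j:ℕ) (i:ℕ) with h | h | h
    · rw [if_neg (by intro e; subst e; omega), if_pos h, if_pos h.le, zero_add,
        mul_one_div, div_self hs0]
    · rw [if_pos (Fin.ext h.symm), if_neg (by omega), if_pos (by omega)]; ring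
    · rw [if_neg (by intro e; subst e; omega), if_neg (by omega), if_neg (by omega)]; ring
  set B : Matrix (Fin (s+1)) (Fin (s+1)) ℝ :=
    fun j k => (if j = k then (1:ℝ) else 0) - (if (j:ℕ) = (k:ℕ)+1 then 1 else 0) with hB
  have sum2 : ∀ (i : Fin (s+1)) (f : Fin (s+1) → ℝ),
      (∑ k : Fin (s+1), (if (i:ℕ) = (k:ℕ)+1 then 1 else 0) * f k)
        = if h : 0 < (i:ℕ) then f ⟨(i:ℕ)-1, by omega⟩ else 0 := by
    intro i f
    split
    · next h =>
      rw [Finset.sum_eq_single (⟨(i:ℕ)-1, by omega⟩ : Fin (s+1))]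
      · simp [if_pos (by omega : (i:ℕ) = ((i:ℕ)-1)+1)]
      · intro k _ hk
        have : ¬ (i:ℕ) = (k:ℕ)+1 := by
          intro e
          exact hk (Fin.ext (by simp; omega))
        simp [this]
      · intro h'; exact absurd (Finset.mem_univ _) h'
    · next h =>
      apply Finset.sum_eq_zero
      intro k _
      have : ¬ (i:ℕ) = (k:ℕ)+1 := by omega
      simp [this]
  have hsplit : ∀ (i : Fin (s+1)) (f : Fin (s+1) → ℝ),
      (∑ j, B i j * f j)
        = f i - (if h : 0 < (i:ℕ) then f ⟨(i:ℕ)-1, by omega⟩ else 0) := by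
    intro i f
    have : ∀ j, B i j * f j
        = (if i = j then (1:ℝ) else 0) * f j - (if (i:ℕ) = (j:ℕ)+1 then 1 else 0) * f j := by
      intro j; rw [hB]; ring
    rw [Finset.sum_congr rfl (fun j _ => this j), Finset.sum_sub_distrib, sum2 i f]
    congr 1
    simp [Finset.sum_ite_eq]
  have hBM : B * M = 1 := by
    ext i k
    rw [Matrix.mul_apply, hsplit i (fun j => M j k), Matrix.one_apply]
    split
    · next h =>
      rw [hMe, hMe]
      rcases lt_trichotomy (k:ℕ) (i:ℕ) with h' | h' | h'
      · rw [if_pos (by omega), if_pos (show ((⟨(i:ℕ)-1, by omega⟩ : Fin (s+1)):ℕ) ≥ (k:ℕ) by simp; omega),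
          if_neg (by intro e; subst e; omega)]
        ring
      · rw [if_pos (by omega), if_neg (show ¬ (k:ℕ) ≤ ((⟨(i:ℕ)-1, by omega⟩ : Fin (s+1)):ℕ) by simp; omega),
          if_pos (Fin.ext h'.symm)]
        ring
      · rw [if_neg (by omega), if_neg (show ¬ (k:ℕ) ≤ ((⟨(i:ℕ)-1, by omega⟩ : Fin (s+1)):ℕ) by simp; omega),
          if_neg (by intro e; subst e; omega)]
        ring
    · next h =>
      have hi : (i:ℕ) = 0 := by omega
      rw [hMe, sub_zero]
      by_cases e : i = k
      · subst e; simp [hi]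
      · rw [if_neg (by intro e'; exact e (Fin.ext (by omega))), if_neg e]
  have hInv : Invertible M := invertibleOfLeftInverse M B hBM
  have hMinv : M⁻¹ = B := Matrix.inv_eq_left_inv hBM
  refine ⟨isUnit_of_invertible M, ?_, ?_⟩
  · intro i
    rw [hMinv, Matrix.mulVec, dotProduct]
    rw [hsplit i (fun _ => (1:ℝ))]
    split <;> norm_num
  · intro i j
    rw [Matrix.smul_apply, Matrix.mul_apply, hMinv, hsplit i (fun k => A k j)]
    split
    · next hpos =>
      simp only [hA, smul_eq_mul]
      split_ifs with c1 c2 c2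
      · simp
      · rw [sub_zero, mul_one_div, div_self hs0]; norm_num
      · exfalso; omega
      · simp
    · next hpos =>
      simp only [hA, smul_eq_mul, if_neg (show ¬ (j:ℕ) < (i:ℕ) by omega)]
      simp
end

section
/- Let s ≥ 2 and let 𝔸 be the (s+1)×(s+1) matrix with 𝔸_{ij} = 1/(s-1) for 1 ≤ j < i ≤ s, 𝔸_{s+1,j} = 1/s for 1 ≤ j ≤ s, and all other entries zero. Then for r = s - 1, the matrix I + r𝔸 is invertible, (I + r𝔸)^{-1}e ≥ 0 and r(I + r𝔸)^{-1}𝔸 ≥ 0 componentwise. -/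
open Matrix

private lemma sum_coe_eq_aux {n : ℕ} (m : ℕ) (h : m < n) (f : Fin n → ℝ) :
    ∑ k : Fin n, (if (k : ℕ) = m then f k else 0) = f ⟨m, h⟩ := by
  rw [Finset.sum_eq_single (⟨m, h⟩ : Fin n)]
  · simp
  · intro b _ hb
    rw [if_neg]
    intro hbm
    exact hb (Fin.ext hbm)
  · simp

theorem stmt_9 (s : ℕ) (hs : 2 ≤ s)
    (A : Matrix (Fin (s + 1)) (Fin (s + 1)) ℝ)
    (hA : ∀ i j, A i j =
      if (i : ℕ) = s then (if (j : ℕ) < s then (1 : ℝ) / s else 0)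
      else (if (j : ℕ) < (i : ℕ) then (1 : ℝ) / (s - 1) else 0)) :
    IsUnit (1 + ((s : ℝ) - 1) • A) ∧
    (∀ i, 0 ≤ ((1 + ((s : ℝ) - 1) • A)⁻¹ *ᵥ (fun _ => (1 : ℝ))) i) ∧
    (∀ i j, 0 ≤ (((s : ℝ) - 1) • ((1 + ((s : ℝ) - 1) • A)⁻¹ * A)) i j) := by
  have hs2 : (2 : ℝ) ≤ (s : ℝ) := by exact_mod_cast hs
  have hr0 : (0 : ℝ) < (s : ℝ) - 1 := by linarith
  have hrne : (s : ℝ) - 1 ≠ 0 := ne_of_gt hr0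
  have hsne : (s : ℝ) ≠ 0 := by linarith
  set r : ℝ := (s : ℝ) - 1 with hr
  set M : Matrix (Fin (s + 1)) (Fin (s + 1)) ℝ := 1 + r • A with hM
  have hMapply : ∀ i j, M i j = (if i = j then (1 : ℝ) else 0) + r * A i j := by
    intro i j
    simp [hM, Matrix.one_apply, Matrix.add_apply]
  have hLT : M.BlockTriangular OrderDual.toDual := by
    intro i j hij
    simp only [OrderDual.toDual_lt_toDual] at hij
    rw [hMapply, hA]
    have hij' : (i : ℕ) < (j : ℕ) := hij
    have h1 : ¬ (i = j) := ne_of_lt hij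
    have h2 : ¬ ((j : ℕ) < (i : ℕ)) := by omega
    have h3 : ¬ ((i : ℕ) = s) := by omega
    simp [h1, h2, h3]
  have hdiag : ∀ i, M i i = 1 := by
    intro i
    rw [hMapply, hA]
    by_cases h : (i : ℕ) = s <;> simp [h]
  have hdet : M.det = 1 := by
    rw [Matrix.det_of_lowerTriangular M hLT]
    simp [hdiag]
  have hU : IsUnit M := by
    rw [Matrix.isUnit_iff_isUnit_det, hdet]; exact isUnit_one
  have hinvmul : M⁻¹ * M = 1 := Matrix.nonsing_inv_mul M (by rw [hdet]; exact isUnit_one)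
  refine ⟨hU, ?_, ?_⟩
  · -- vector part
    set x : Fin (s + 1) → ℝ := fun j =>
      (if j = 0 then (1 : ℝ) else 0) + (if (j : ℕ) = s then 1 / (s : ℝ) else 0) with hx
    have hMx : M *ᵥ x = (fun _ => (1 : ℝ)) := by
      funext i
      show ∑ j, M i j * x j = 1
      have expand : ∀ j, M i j * x j =
          (if j = 0 then M i j * 1 else 0) + (if (j : ℕ) = s then M i j * (1 / s) else 0) := by
        intro j
        simp only [hx, mul_add, mul_ite, mul_zero]
      simp only [expand, Finset.sum_add_distrib, Finset.sum_ite_eq']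
      rw [sum_coe_eq_aux s (by omega) (fun j => M i j * (1 / s))]
      simp only [Finset.mem_univ, if_true, mul_one]
      rw [hMapply, hMapply, hA, hA]
      simp only [Fin.ext_iff, Fin.val_mk]; rw [Fin.val_zero]
      split_ifs <;> first | (exfalso; omega) | (field_simp [hr]; try ring)
    have hxeq : M⁻¹ *ᵥ (fun _ => (1 : ℝ)) = x := by
      rw [← hMx, Matrix.mulVec_mulVec, hinvmul, Matrix.one_mulVec]
    intro i
    rw [hxeq]
    have hspos : (0:ℝ) < (s:ℝ) := by linarith
    have h1 : (0:ℝ) ≤ 1 / (s:ℝ) := by positivity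
    simp only [hx]
    apply add_nonneg <;> split_ifs <;> simp [h1]
  · -- matrix part
    set B : Matrix (Fin (s + 1)) (Fin (s + 1)) ℝ := fun k j =>
      (if (j : ℕ) + 1 < s then (if (k : ℕ) = (j : ℕ) + 1 then 1 / r else 0) else 0)
      + (if (j : ℕ) = s - 1 then (if (k : ℕ) = s then 1 / (s : ℝ) else 0) else 0) with hB
    have hMB : M * B = A := by
      ext i j
      show ∑ k, M i k * B k j = A i j
      have expand : ∀ k, M i k * B k j =
          (if (j : ℕ) + 1 < s then (if (k : ℕ) = (j : ℕ) + 1 then M i k * (1 / r) else 0) else 0)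
          + (if (j : ℕ) = s - 1 then (if (k : ℕ) = s then M i k * (1 / s) else 0) else 0) := by
        intro k
        simp only [hB]
        split_ifs <;> ring
      simp only [expand, Finset.sum_add_distrib]
      by_cases h1 : (j : ℕ) + 1 < s <;> by_cases h2 : (j : ℕ) = s - 1
      · exfalso; omega
      · simp_rw [if_pos h1, if_neg h2]
        simp only [Finset.sum_const_zero, add_zero]
        rw [sum_coe_eq_aux ((j:ℕ)+1) (by omega), hMapply, hA, hA]
        simp only [Fin.ext_iff, Fin.val_zero, Fin.val_mk]
        split_ifs <;> first | (exfalso; omega) | (field_simp [hr]; try ring)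
      · simp_rw [if_neg h1, if_pos h2]
        simp only [Finset.sum_const_zero, zero_add]
        rw [sum_coe_eq_aux s (by omega), hMapply, hA, hA]
        simp only [Fin.ext_iff, Fin.val_zero, Fin.val_mk]
        split_ifs <;> first | (exfalso; omega) | (field_simp [hr]; try ring)
      · simp_rw [if_neg h1, if_neg h2]
        simp only [Finset.sum_const_zero, add_zero]
        rw [hA]
        split_ifs <;> first | rfl | (exfalso; omega)
    have hinvA : M⁻¹ * A = B := by
      calc M⁻¹ * A = M⁻¹ * (M * B) := by rw [hMB]
        _ = (M⁻¹ * M) * B := by rw [Matrix.mul_assoc]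
        _ = B := by rw [hinvmul, Matrix.one_mul]
    intro i j
    have hBpos : 0 ≤ B i j := by
      have hspos : (0:ℝ) < (s:ℝ) := by linarith
      have h1 : (0:ℝ) ≤ 1 / r := by positivity
      have h2 : (0:ℝ) ≤ 1 / (s:ℝ) := by positivity
      simp only [hB]
      apply add_nonneg <;> split_ifs <;> first | exact le_refl (0:ℝ) | exact h1 | exact h2
    rw [Matrix.smul_apply, hinvA, smul_eq_mul]
    exact mul_nonneg hr0.le hBpos
end
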